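/- Let x be a critical point of E (i.e., ∇E(x) = 0 with κ > 0) such that γᵢⱼ x̃ⱼ has the same sign for all j (where x̃ is the sign-adjusted vector with xᵢ = x̃ᵢ = 0 at vertex i). If xᵢ = 0, then for every neighbor j of i (γᵢⱼ ≠ 0) we have xⱼ = 0; consequently, if G is connected and binds all vertices, x = 0. -/

import Mathlib

/-- let `x` be a critical point of `E` (`κ > 0`, component
equations `2κ Σ_{j≠i} γᵢⱼ(xᵢ - xⱼ) + W'(xᵢ) = 0`) that is sign-adjusted for the
balanced partition `σ` (so all `γᵢⱼ xⱼ` have the same sign for each fixed `i`).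
If `xᵢ = 0` then `xⱼ = 0` for every neighbor `j` of `i`; consequently, since `G`
is connected, if some coordinate vanishes then `x = 0`. -/
theorem stmt18 (n : ℕ) (γ : Fin n → Fin n → ℝ)
    (hsym : ∀ i j, γ i j = γ j i) (hdiag : ∀ i, γ i i = 0)
    (hconn : ∀ i j : Fin n, Relation.ReflTransGen (fun a b => γ a b ≠ 0) i j)
    (σ : Fin n → Bool)
    (hpart : ∀ i j, (σ i = σ j → 0 ≤ γ i j) ∧ (σ i ≠ σ j → γ i j ≤ 0))
    (W : ℝ → ℝ) (hW : ContDiff ℝ 2 W) (heven : ∀ t, W (-t) = W t)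
    (hW'0 : deriv W 0 = 0)
    (κ : ℝ) (hκ : 0 < κ)
    (x : Fin n → ℝ)
    (hsign : ∀ j, (σ j = true → 0 ≤ x j) ∧ (σ j = false → x j ≤ 0))
    (hcrit : ∀ i, 2 * κ * ∑ j ∈ Finset.univ.erase i, γ i j * (x i - x j)
      + deriv W (x i) = 0) :
    (∀ i, x i = 0 → ∀ j, γ i j ≠ 0 → x j = 0) ∧
    ((∃ i, x i = 0) → x = 0) := by
  have key : ∀ i, x i = 0 → ∀ j, γ i j ≠ 0 → x j = 0 := by
    intro i hi j hj
    set s : ℝ := if σ i = true then 1 else -1 with hs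
    -- each term s * (γ i k * x k) is nonnegative
    have hterm : ∀ k, 0 ≤ s * (γ i k * x k) := by
      intro k
      by_cases hσi : σ i = true
      · simp only [hs, hσi, if_true, one_mul]
        by_cases hσk : σ k = true
        · exact mul_nonneg ((hpart i k).1 (by rw [hσi, hσk])) ((hsign k).1 hσk)
        · have hk : σ k = false := by simpa using hσk
          nlinarith [(hpart i k).2 (by simp [hσi, hk]), (hsign k).2 hk]
      · have hif : σ i = false := by simpa using hσi
        have hse : s = -1 := by simp [hs, hσi]
        rw [hse]
        by_cases hσk : σ k = true
        · have : γ i k * x k ≤ 0 :=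
            mul_nonpos_of_nonpos_of_nonneg
              ((hpart i k).2 (by simp [hif, hσk])) ((hsign k).1 hσk)
          linarith
        · have hk : σ k = false := by simpa using hσk
          have : γ i k * x k ≤ 0 :=
            mul_nonpos_of_nonneg_of_nonpos
              ((hpart i k).1 (by rw [hif, hk])) ((hsign k).2 hk)
          linarith
    -- the sum of the terms vanishes
    have hsum : ∑ k ∈ Finset.univ.erase i, γ i k * x k = 0 := by
      have h := hcrit i
      rw [hi, hW'0] at h
      have h2 : (2 * κ) * ∑ k ∈ Finset.univ.erase i, (0 - x k) * γ i k = 0 := by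
        rw [show ∑ k ∈ Finset.univ.erase i, (0 - x k) * γ i k
            = ∑ k ∈ Finset.univ.erase i, γ i k * (0 - x k) by
          exact Finset.sum_congr rfl fun k _ => mul_comm _ _]
        linarith
      have h3 : ∑ k ∈ Finset.univ.erase i, (0 - x k) * γ i k = 0 := by
        have : (2 * κ) ≠ 0 := by positivity
        exact (mul_eq_zero.mp h2).resolve_left this
      have h4 : ∑ k ∈ Finset.univ.erase i, (0 - x k) * γ i k
          = -∑ k ∈ Finset.univ.erase i, γ i k * x k := by
        rw [← Finset.sum_neg_distrib]
        exact Finset.sum_congr rfl fun k _ => by ring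
      linarith [h4 ▸ h3]
    have hsum' : ∑ k ∈ Finset.univ.erase i, s * (γ i k * x k) = 0 := by
      rw [← Finset.mul_sum, hsum, mul_zero]
    have hji : j ∈ Finset.univ.erase i := by
      refine Finset.mem_erase.mpr ⟨?_, Finset.mem_univ j⟩
      intro hji; apply hj; rw [hji, hdiag]
    have hzero := (Finset.sum_eq_zero_iff_of_nonneg
      (fun k _ => hterm k)).mp hsum' j hji
    have hsne : s ≠ 0 := by
      by_cases hσi : σ i = true <;> simp [hs, hσi]
    have := (mul_eq_zero.mp hzero).resolve_left hsne
    exact (mul_eq_zero.mp this).resolve_left hj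
  refine ⟨key, ?_⟩
  rintro ⟨i, hi⟩
  funext j
  have := hconn i j
  induction this with
  | refl => exact hi
  | tail _ hab ih => exact key _ ih _ hab
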